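/- The Lie algebra L(A)⊗ℤ[1/2] (with the bracket given by the structure constants of Proposition 4.2) is generated by the elements S_1 = W_{1,1}, ..., S_{n-1} = W_{n-1,n-1}, S_n = V_n, and S'_n = U_{n,n}. In particular, every basis element W_{i,j}, V_i, U_{i,j} lies in the Lie subalgebra generated by these n+1 elements; explicitly U_{j,n} = ([W_{j,n-1},U_{n,n}] − [V_j,V_n])/2 and U_{n,j} = ([W_{j,n-1},U_{n,n}] + [V_j,V_n])/2. -/

import Mathlib

/-- Index set of the isomorphism classes of indecomposable Λ(n-1,1,1)-modules:
`Sum.inl (i,j)` is U_{i,j} (1≤i,j≤n), `Sum.inr (Sum.inl i)` is V_i, and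
`Sum.inr (Sum.inr ⟨(i,j),_⟩)` is W_{i,j} (1≤i≤j≤n-1), all 0-indexed. -/
abbrev LIdx (n : ℕ) :=
  (Fin n × Fin n) ⊕ (Fin n ⊕ {p : Fin n × Fin n // p.1 ≤ p.2 ∧ p.2.val + 1 < n})

/-- Structure constants of Riedtmann's Lie algebra of Λ(n-1,1,1)
(Proposition 4.2 of the paper). -/
noncomputable def cst {n : ℕ} (R : Type) [CommRing R] :
    LIdx n → LIdx n → (LIdx n →₀ R)
  | .inr (.inr p), .inr (.inr q) =>
      (if h : p.1.2.val + 1 = q.1.1.val then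
        Finsupp.single (.inr (.inr ⟨(p.1.1, q.1.2), by
          obtain ⟨h1, _⟩ := p.2; obtain ⟨h2, h3⟩ := q.2
          refine ⟨?_, h3⟩
          change p.1.1 ≤ q.1.2
          rw [Fin.le_def] at h1 h2 ⊢
          omega⟩)) (1 : R)
      else 0)
      - (if h : q.1.2.val + 1 = p.1.1.val then
        Finsupp.single (.inr (.inr ⟨(q.1.1, p.1.2), by
          obtain ⟨h1, h4⟩ := p.2; obtain ⟨h2, _⟩ := q.2
          refine ⟨?_, h4⟩
          change q.1.1 ≤ p.1.2
          rw [Fin.le_def] at h1 h2 ⊢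
          omega⟩)) (1 : R)
      else 0)
  | .inr (.inr p), .inr (.inl l) =>
      if p.1.2.val + 1 = l.val then Finsupp.single (.inr (.inl p.1.1)) (1 : R) else 0
  | .inr (.inl l), .inr (.inr p) =>
      -(if p.1.2.val + 1 = l.val then Finsupp.single (.inr (.inl p.1.1)) (1 : R) else 0)
  | .inr (.inr p), .inl (l, m) =>
      (if p.1.2.val + 1 = m.val then Finsupp.single (.inl (l, p.1.1)) (1 : R) else 0)
      + (if p.1.2.val + 1 = l.val then Finsupp.single (.inl (p.1.1, m)) (1 : R) else 0)
  | .inl (l, m), .inr (.inr p) =>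
      -((if p.1.2.val + 1 = m.val then Finsupp.single (.inl (l, p.1.1)) (1 : R) else 0)
        + (if p.1.2.val + 1 = l.val then Finsupp.single (.inl (p.1.1, m)) (1 : R) else 0))
  | .inr (.inl i), .inr (.inl j) =>
      Finsupp.single (.inl (j, i)) (1 : R) - Finsupp.single (.inl (i, j)) (1 : R)
  | _, _ => 0

/-- The bilinear bracket on the free module on the indecomposables determined by
the structure constants of Proposition 4.2. -/
noncomputable def brkt {n : ℕ} {R : Type} [CommRing R] (x y : LIdx n →₀ R) :
    LIdx n →₀ R :=
  Finsupp.sum x fun a r => Finsupp.sum y fun b s => (r * s) • cst R a b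

/-- Basis element U_{i,j}. -/
noncomputable def Ub {n : ℕ} (R : Type) [CommRing R] (i j : Fin n) : LIdx n →₀ R :=
  Finsupp.single (.inl (i, j)) 1

/-- Basis element V_i. -/
noncomputable def Vb {n : ℕ} (R : Type) [CommRing R] (i : Fin n) : LIdx n →₀ R :=
  Finsupp.single (.inr (.inl i)) 1

/-- Basis element W_{i,j} (i ≤ j ≤ n-1, 0-indexed j+1 < n). -/
noncomputable def Wb {n : ℕ} (R : Type) [CommRing R] (i j : Fin n)
    (h : i ≤ j ∧ j.val + 1 < n) : LIdx n →₀ R :=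
  Finsupp.single (.inr (.inr ⟨(i, j), h⟩)) 1

/-- The ring ℤ[1/2]. -/
abbrev ZHalf : Type := Localization.Away (2 : ℤ)

/-- The element 1/2 of ℤ[1/2]. -/
noncomputable def half : ZHalf := IsLocalization.Away.invSelf (S := ZHalf) (2 : ℤ)

section Aux
variable {n : ℕ} {R : Type} [CommRing R]

lemma brkt_single (a b : LIdx n) (r s : R) :
    brkt (Finsupp.single a r) (Finsupp.single b s) = (r * s) • cst R a b := by
  unfold brkt
  rw [Finsupp.sum_single_index, Finsupp.sum_single_index] <;> simp

lemma brkt_basis (a b : LIdx n) :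
    brkt (Finsupp.single a (1:R)) (Finsupp.single b (1:R)) = cst R a b := by
  rw [brkt_single, one_mul, one_smul]

lemma bWW (i j k l : Fin n) (h : i ≤ j ∧ j.val + 1 < n) (h' : k ≤ l ∧ l.val + 1 < n)
    (hc : j.val + 1 = k.val) (hil : i ≤ l ∧ l.val + 1 < n) :
    brkt (Wb R i j h) (Wb R k l h') = Wb R i l hil := by
  rw [Wb, Wb, brkt_basis]
  show (if h : j.val + 1 = k.val then _ else 0) - (if h : l.val + 1 = i.val then _ else 0) = _
  rw [dif_pos hc, dif_neg (by rw [Fin.le_def] at h h'; omega), sub_zero]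
  rfl

lemma bWV (i j k : Fin n) (h : i ≤ j ∧ j.val + 1 < n) (hc : j.val + 1 = k.val) :
    brkt (Wb R i j h) (Vb R k) = Vb R i := by
  rw [Wb, Vb, brkt_basis]
  show (if j.val + 1 = k.val then _ else 0) = _
  rw [if_pos hc]; rfl

lemma bWU (i j l m : Fin n) (h : i ≤ j ∧ j.val + 1 < n) :
    brkt (Wb R i j h) (Ub R l m) =
      (if j.val + 1 = m.val then Ub R l i else 0)
      + (if j.val + 1 = l.val then Ub R i m else 0) := by
  rw [Wb, Ub, brkt_basis]
  show (if j.val + 1 = m.val then _ else 0) + (if j.val + 1 = l.val then _ else 0) = _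
  congr 1

lemma bVV (i j : Fin n) : brkt (Vb R i) (Vb R j) = Ub R j i - Ub R i j := by
  rw [Vb, Vb, brkt_basis]; rfl

end Aux

lemma two_mul_half : (2 : ZHalf) * half = 1 := by
  have := IsLocalization.Away.mul_invSelf (S := ZHalf) (2 : ℤ)
  rw [half, ← this]
  norm_num

lemma half_smul_two {M : Type*} [AddCommGroup M] [Module ZHalf M] (x : M) :
    half • (x + x) = x := by
  rw [← two_smul ZHalf x, ← mul_smul, mul_comm, two_mul_half, one_smul]

lemma sub_mem' {n : ℕ} (P : Submodule ZHalf (LIdx n →₀ ZHalf)) {x y : LIdx n →₀ ZHalf}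
    (hx : x ∈ P) (hy : y ∈ P) : x - y ∈ P := by
  have h : x - y = x + (-1 : ZHalf) • y := by
    ext a
    simp [Finsupp.sub_apply, Finsupp.add_apply, Finsupp.smul_apply]
    ring
  rw [h]
  exact P.add_mem hx (P.smul_mem _ hy)

lemma key_formulas (n : ℕ) (hn : 2 ≤ n) (j : Fin n) (hj : j.val + 1 < n)
    (hn1 : n - 1 < n) (hn2 : n - 2 < n)
    (h2 : j ≤ (⟨n - 2, hn2⟩ : Fin n) ∧ (n - 2) + 1 < n) :
    Ub ZHalf j ⟨n - 1, hn1⟩ =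
      half • (brkt (Wb ZHalf j ⟨n - 2, hn2⟩ h2)
          (Ub ZHalf ⟨n - 1, hn1⟩ ⟨n - 1, hn1⟩)
        - brkt (Vb ZHalf j) (Vb ZHalf ⟨n - 1, hn1⟩)) ∧
    Ub ZHalf ⟨n - 1, hn1⟩ j =
      half • (brkt (Wb ZHalf j ⟨n - 2, hn2⟩ h2)
          (Ub ZHalf ⟨n - 1, hn1⟩ ⟨n - 1, hn1⟩)
        + brkt (Vb ZHalf j) (Vb ZHalf ⟨n - 1, hn1⟩)) := by
  have hc : ((⟨n - 2, hn2⟩ : Fin n)).val + 1 = ((⟨n - 1, hn1⟩ : Fin n)).val := by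
    show n - 2 + 1 = n - 1; omega
  rw [bWU, bVV, if_pos hc, if_pos hc]
  set a := Ub ZHalf ⟨n - 1, hn1⟩ j
  set b := Ub ZHalf j ⟨n - 1, hn1⟩
  constructor
  · rw [show a + b - (a - b) = b + b by abel]; exact (half_smul_two b).symm
  · rw [show a + b + (a - b) = a + a by abel]; exact (half_smul_two a).symm

/-- L(A)⊗ℤ[1/2] is generated as a Lie algebra by
S_1 = W_{1,1}, …, S_{n-1} = W_{n-1,n-1}, S_n = V_n and S'_n = U_{n,n}; in
particular U_{j,n} = ([W_{j,n-1},U_{n,n}] − [V_j,V_n])/2 and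
U_{n,j} = ([W_{j,n-1},U_{n,n}] + [V_j,V_n])/2. -/
theorem stmt_14 (n : ℕ) (hn : 2 ≤ n) :
    (∀ P : Submodule ZHalf (LIdx n →₀ ZHalf),
      (∀ (i : Fin n) (h : i.val + 1 < n), Wb ZHalf i i ⟨le_refl i, h⟩ ∈ P) →
      Vb ZHalf ⟨n - 1, by omega⟩ ∈ P →
      Ub ZHalf ⟨n - 1, by omega⟩ ⟨n - 1, by omega⟩ ∈ P →
      (∀ x ∈ P, ∀ y ∈ P, brkt x y ∈ P) →
      ∀ m : LIdx n →₀ ZHalf, m ∈ P) ∧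
    (∀ (j : Fin n) (hj : j.val + 1 < n),
      Ub ZHalf j ⟨n - 1, by omega⟩ =
        half • (brkt
            (Wb ZHalf j ⟨n - 2, by omega⟩
              ⟨by rw [Fin.le_def]; show j.val ≤ n - 2; omega, by show n - 2 + 1 < n; omega⟩)
            (Ub ZHalf ⟨n - 1, by omega⟩ ⟨n - 1, by omega⟩) -
          brkt (Vb ZHalf j) (Vb ZHalf ⟨n - 1, by omega⟩)) ∧
      Ub ZHalf ⟨n - 1, by omega⟩ j =
        half • (brkt
            (Wb ZHalf j ⟨n - 2, by omega⟩
              ⟨by rw [Fin.le_def]; show j.val ≤ n - 2; omega, by show n - 2 + 1 < n; omega⟩)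
            (Ub ZHalf ⟨n - 1, by omega⟩ ⟨n - 1, by omega⟩) +
          brkt (Vb ZHalf j) (Vb ZHalf ⟨n - 1, by omega⟩))) := by
  have hn1 : n - 1 < n := by omega
  have hn2 : n - 2 < n := by omega
  constructor
  · intro P hW hV hU hbr
    -- all W's
    have hWall : ∀ k : ℕ, ∀ (i j : Fin n) (h : i ≤ j ∧ j.val + 1 < n),
        j.val - i.val = k → Wb ZHalf i j h ∈ P := by
      intro k
      induction k with
      | zero =>
        intro i j h hk
        have h1 : i.val ≤ j.val := h.1
        have h2 := h.2
        have : i = j := Fin.ext (by omega)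
        subst this
        exact hW i h.2
      | succ k ih =>
        intro i j h hk
        have h1 : i.val ≤ j.val := h.1
        have h2 := h.2
        have hi1 : i.val + 1 < n := by omega
        have hmem := ih ⟨i.val + 1, by omega⟩ j
          ⟨by rw [Fin.le_def]; show i.val + 1 ≤ j.val; omega, h2⟩ (by simp; omega)
        have hb := hbr _ (hW i hi1) _ hmem
        rwa [bWW i i ⟨i.val + 1, by omega⟩ j _ _ rfl ⟨h.1, h2⟩] at hb
    have hWall' : ∀ (i j : Fin n) (h : i ≤ j ∧ j.val + 1 < n), Wb ZHalf i j h ∈ P :=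
      fun i j h => hWall _ i j h rfl
    -- all V's
    have hVall : ∀ i : Fin n, Vb ZHalf i ∈ P := by
      intro i
      by_cases hi : i.val = n - 1
      · have : i = ⟨n - 1, hn1⟩ := Fin.ext hi
        subst this
        exact hV
      · have hi1 : i.val + 1 < n := by omega
        have hb := hbr _ (hWall' i ⟨n - 2, hn2⟩
          ⟨by rw [Fin.le_def]; show i.val ≤ n - 2; omega, by show n - 2 + 1 < n; omega⟩) _ hV
        rwa [bWV i ⟨n - 2, hn2⟩ ⟨n - 1, by omega⟩ _ (by show n - 2 + 1 = n - 1; omega)] at hb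
    -- U's with an n-1 index
    have hUcol : ∀ i : Fin n, Ub ZHalf i ⟨n - 1, hn1⟩ ∈ P ∧ Ub ZHalf ⟨n - 1, hn1⟩ i ∈ P := by
      intro i
      by_cases hi : i.val = n - 1
      · have : i = ⟨n - 1, hn1⟩ := Fin.ext hi
        subst this
        exact ⟨hU, hU⟩
      · have hi1 : i.val + 1 < n := by omega
        have h2 : i ≤ (⟨n - 2, hn2⟩ : Fin n) ∧ (n - 2) + 1 < n :=
          ⟨by rw [Fin.le_def]; show i.val ≤ n - 2; omega, by omega⟩
        obtain ⟨e1, e2⟩ := key_formulas n hn i hi1 hn1 hn2 h2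
        have hWm := hWall' i ⟨n - 2, hn2⟩ h2
        constructor
        · rw [e1]
          have m1 := hbr _ hWm _ hU
          have m2 := hbr _ (hVall i) _ (hVall ⟨n - 1, hn1⟩)
          exact P.smul_mem half (sub_mem' P m1 m2)
        · rw [e2]
          have m1 := hbr _ hWm _ hU
          have m2 := hbr _ (hVall i) _ (hVall ⟨n - 1, hn1⟩)
          exact P.smul_mem half (P.add_mem m1 m2)
    -- all U's
    have hUall : ∀ i j : Fin n, Ub ZHalf i j ∈ P := by
      intro i j
      by_cases hj : j.val = n - 1
      · have : j = ⟨n - 1, hn1⟩ := Fin.ext hj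
        subst this
        exact (hUcol i).1
      · by_cases hi : i.val = n - 1
        · have : i = ⟨n - 1, hn1⟩ := Fin.ext hi
          subst this
          exact (hUcol j).2
        · have hj1 : j.val + 1 < n := by omega
          have h2 : j ≤ (⟨n - 2, hn2⟩ : Fin n) ∧ (n - 2) + 1 < n :=
            ⟨by rw [Fin.le_def]; show j.val ≤ n - 2; omega, by omega⟩
          have hb := hbr _ (hWall' j ⟨n - 2, hn2⟩ h2) _ (hUcol i).1
          rw [bWU j ⟨n - 2, hn2⟩ i ⟨n - 1, hn1⟩ h2,
            if_pos (show n - 2 + 1 = n - 1 by omega),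
            if_neg (show ¬ n - 2 + 1 = i.val by omega), add_zero] at hb
          exact hb
    -- generation
    intro m
    induction m using Finsupp.induction with
    | zero => exact P.zero_mem
    | single_add a b f _ _ ih =>
      refine P.add_mem ?_ ih
      have : (Finsupp.single a b : LIdx n →₀ ZHalf) = b • Finsupp.single a 1 := by
        rw [Finsupp.smul_single, smul_eq_mul, mul_one]
      rw [this]
      refine P.smul_mem b ?_
      match a with
      | .inl (i, j) => exact hUall i j
      | .inr (.inl i) => exact hVall i
      | .inr (.inr ⟨(i, j), h⟩) => exact hWall' i j h
  · intro j hj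
    exact key_formulas n hn j hj _ _ _
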